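/- Let U ⊆ ℍ be open and let (f_n)_{n∈ℕ} be a sequence of slice regular functions f_n : U → ℍ converging to a function f : U → ℍ uniformly on every compact subset of U. Then f is slice regular on U. -/

import Mathlib

open Quaternion Filter Topology

noncomputable section

/-- The 2-sphere `𝕊 = {q ∈ ℍ : q² = -1}` of quaternionic imaginary units. -/
def QS : Set ℍ[ℝ] := {q | q ^ 2 = -1}

/-- The slice function `g_I(x,y) = f(x + yI)`. -/
def sliceFun (f : ℍ[ℝ] → ℍ[ℝ]) (I : ℍ[ℝ]) (p : ℝ × ℝ) : ℍ[ℝ] :=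
  f ((p.1 : ℍ[ℝ]) + p.2 • I)

/-- `f` is slice regular on `Ω`: for each imaginary unit `I`, the slice function
`g_I(x,y) = f(x+yI)` is real differentiable and satisfies `∂g/∂x + I ∂g/∂y = 0`
at every point `(x,y)` with `x + yI ∈ Ω`. -/
def SliceRegularOn (f : ℍ[ℝ] → ℍ[ℝ]) (Ω : Set ℍ[ℝ]) : Prop :=
  ∀ I ∈ QS, ∀ p : ℝ × ℝ, ((p.1 : ℍ[ℝ]) + p.2 • I) ∈ Ω →
    DifferentiableAt ℝ (sliceFun f I) p ∧
    fderiv ℝ (sliceFun f I) p (1, 0) + I * fderiv ℝ (sliceFun f I) p (0, 1) = 0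

/-- The 2-sphere `x + y𝕊 = {x + yJ : J ∈ 𝕊}` (a real point when `y = 0`). -/
def qSphere (x y : ℝ) : Set ℍ[ℝ] := {q | ∃ I ∈ QS, q = (x : ℍ[ℝ]) + y • I}

/-- The symmetric open set `U(x₀+y₀𝕊, R) = {q : |(q-x₀)² + y₀²| < R²}`. -/
def sphU (x0 y0 R : ℝ) : Set ℍ[ℝ] :=
  {q | ‖(q - (x0 : ℍ[ℝ])) ^ 2 + ((y0 : ℍ[ℝ])) ^ 2‖ < R ^ 2}

/-- `Ω` is axially symmetric. -/
def AxSymm (Ω : Set ℍ[ℝ]) : Prop :=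
  ∀ x y : ℝ, ∀ I ∈ QS, ((x : ℍ[ℝ]) + y • I) ∈ Ω → qSphere x y ⊆ Ω

/-- `Ω` is a symmetric slice domain: an axially symmetric, open, connected set that
meets the real axis and whose intersection with each slice `L_I = ℝ + ℝI` is connected. -/
def SymmSliceDomain (Ω : Set ℍ[ℝ]) : Prop :=
  IsOpen Ω ∧ IsConnected Ω ∧ AxSymm Ω ∧ (∃ r : ℝ, (r : ℍ[ℝ]) ∈ Ω) ∧
    ∀ I ∈ QS, IsConnected {q ∈ Ω | ∃ a b : ℝ, q = (a : ℍ[ℝ]) + b • I}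

lemma QS_facts {I : ℍ[ℝ]} (hI : I ∈ QS) :
    I.re = 0 ∧ I.imI ^ 2 + I.imJ ^ 2 + I.imK ^ 2 = 1 := by
  have h : I * I = -1 := by rw [← sq]; exact hI
  have h1 := congrArg QuaternionAlgebra.re h
  have h2 := congrArg QuaternionAlgebra.imI h
  have h3 := congrArg QuaternionAlgebra.imJ h
  have h4 := congrArg QuaternionAlgebra.imK h
  simp [Quaternion.re_mul, Quaternion.imI_mul, Quaternion.imJ_mul, Quaternion.imK_mul] at h1 h2 h3 h4
  have e2 : I.re * I.imI = 0 := by linear_combination h2 / 2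
  have e3 : I.re * I.imJ = 0 := by linear_combination h3 / 2
  have e4 : I.re * I.imK = 0 := by linear_combination h4 / 2
  have key : I.re * (I.re ^ 2 + 1) = 0 := by
    linear_combination I.re * h1 + I.imI * e2 + I.imJ * e3 + I.imK * e4
  have hpos : I.re ^ 2 + 1 > 0 := by positivity
  have hre : I.re = 0 := by
    rcases mul_eq_zero.1 key with h | h
    · exact h
    · exact absurd h (ne_of_gt hpos)
  exact ⟨hre, by nlinarith [h1, hre]⟩

lemma norm_liftAux {I : ℍ[ℝ]} (hI : I ∈ QS) (hI2 : I * I = -1) (z : ℂ) :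
    ‖Complex.liftAux I hI2 z‖ = ‖z‖ := by
  obtain ⟨hre, hsq⟩ := QS_facts hI
  have hz : ‖z‖ * ‖z‖ = z.re ^ 2 + z.im ^ 2 := by
    have : ‖z‖ ^ 2 = z.re ^ 2 + z.im ^ 2 := by
      rw [Complex.sq_norm, Complex.normSq_apply]; ring
    nlinarith [this]
  have hq : Quaternion.normSq (Complex.liftAux I hI2 z) =
      ‖Complex.liftAux I hI2 z‖ * ‖Complex.liftAux I hI2 z‖ :=
    Quaternion.normSq_eq_norm_mul_self _
  have hq2 : Quaternion.normSq (Complex.liftAux I hI2 z) = z.re ^ 2 + z.im ^ 2 := by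
    rw [Complex.liftAux_apply, Quaternion.normSq_def']
    simp [Quaternion.algebraMap_def, smul_eq_mul, hre]
    nlinarith [hsq]
  have h5 : ‖Complex.liftAux I hI2 z‖ * ‖Complex.liftAux I hI2 z‖ = ‖z‖ * ‖z‖ := by
    rw [← hq, hq2, hz]
  exact (mul_self_inj (norm_nonneg _) (norm_nonneg _)).1 h5

lemma D_decomp (D : ℂ →L[ℝ] ℍ[ℝ]) (u : ℂ) :
    D u = u.re • D 1 + u.im • D Complex.I := by
  conv_lhs => rw [← Complex.re_add_im u]
  rw [show (u.re : ℂ) + u.im * Complex.I = u.re • (1 : ℂ) + u.im • Complex.I by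
    simp [Complex.real_smul]]
  rw [map_add, map_smul, map_smul]

lemma liftAux_mul_D (I : ℍ[ℝ]) (hI2 : I * I = -1) (D : ℂ →L[ℝ] ℍ[ℝ])
    (hDi : D Complex.I = I * D 1) (z w : ℂ) :
    D (z * w) = Complex.liftAux I hI2 z * D w := by
  have hI2' : I * (I * D 1) = -D 1 := by rw [← mul_assoc, hI2, neg_one_mul]
  rw [D_decomp D (z * w), D_decomp D w, Complex.liftAux_apply, hDi]
  simp only [Complex.mul_re, Complex.mul_im, Quaternion.algebraMap_def]
  simp only [mul_add, add_mul, Quaternion.coe_mul_eq_smul, smul_mul_assoc,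
    mul_smul_comm, hI2', smul_smul, smul_add, smul_neg]
  module


/-- a limit, uniform on all compact subsets of an open set `U`, of slice
regular functions on `U` is slice regular on `U`. -/
theorem sliceRegular_of_uniform_limit_on_compacts (U : Set ℍ[ℝ]) (hU : IsOpen U)
    (F : ℕ → ℍ[ℝ] → ℍ[ℝ]) (f : ℍ[ℝ] → ℍ[ℝ])
    (hreg : ∀ n, SliceRegularOn (F n) U)
    (hconv : ∀ K : Set ℍ[ℝ], K ⊆ U → IsCompact K →
      TendstoUniformlyOn F f Filter.atTop K) :
    SliceRegularOn f U := by
  intro I hI p hp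
  have hI2 : I * I = -1 := by rw [← sq]; exact hI
  set φ := Complex.liftAux I hI2 with hφ
  let e : ℂ →L[ℝ] ℍ[ℝ] := LinearMap.toContinuousLinearMap φ.toLinearMap
  set em : ℂ → ℍ[ℝ] := fun z => (z.re : ℍ[ℝ]) + z.im • I with hem
  have he : ⇑e = em := by
    funext z
    simp [e, em, hφ, Complex.liftAux_apply, Quaternion.algebraMap_def]
  have hemcont : Continuous em := he ▸ e.continuous
  -- complex module structure on ℍ via left multiplication through φ
  letI : Module ℂ ℍ[ℝ] := Module.compHom ℍ[ℝ] (φ.toRingHom : ℂ →+* ℍ[ℝ])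
  have hsmul : ∀ (z : ℂ) (q : ℍ[ℝ]), z • q = φ z * q := fun _ _ => rfl
  letI : NormedSpace ℂ ℍ[ℝ] :=
    { norm_smul_le := fun z q => by rw [hsmul, norm_mul, norm_liftAux hI hI2] }
  letI : IsScalarTower ℝ ℂ ℍ[ℝ] := ⟨fun r z q => by
    rw [hsmul, hsmul]
    have h1 : φ (r • z) = (r : ℍ[ℝ]) * φ z := by
      rw [show r • z = (r : ℂ) * z from Complex.real_smul, map_mul]
      congr 1
      simp [hφ, Complex.liftAux_apply, Quaternion.algebraMap_def]
    rw [h1, mul_assoc, Quaternion.coe_mul_eq_smul]⟩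
  set V : Set ℂ := em ⁻¹' U with hV
  have hVopen : IsOpen V := hU.preimage hemcont
  -- each F n ∘ em is ℂ-differentiable on V
  have hdiff : ∀ n, DifferentiableOn ℂ (fun z => F n (em z)) V := by
    intro n z hz
    obtain ⟨hd, hcr⟩ := hreg n I hI (z.re, z.im) hz
    set G := fderiv ℝ (sliceFun (F n) I) (z.re, z.im) with hG
    have hgz : HasFDerivAt (sliceFun (F n) I) G (z.re, z.im) := hd.hasFDerivAt
    set c : ℂ →L[ℝ] ℝ × ℝ := Complex.equivRealProdCLM.toContinuousLinearMap with hc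
    have hcz : HasFDerivAt (⇑c) c z := c.hasFDerivAt
    have hcomp : HasFDerivAt (fun w : ℂ => F n (em w)) (G.comp c) z := by
      have h0 := hgz.comp z hcz
      have : (sliceFun (F n) I) ∘ (⇑c) = fun w : ℂ => F n (em w) := by
        funext w
        simp [sliceFun, em, Function.comp, c]
      rwa [this] at h0
    set D := G.comp c with hD
    have hc1 : c 1 = (1, 0) := by simp [c]
    have hci : c Complex.I = (0, 1) := by simp [c]
    have hD1 : D 1 = G (1, 0) := by rw [hD]; simp [hc1]
    have hDi : D Complex.I = I * D 1 := by
      rw [hD]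
      simp only [ContinuousLinearMap.comp_apply, hc1, hci]
      -- from CR relation
      have h2 := congrArg (fun q => I * q) hcr
      simp only [mul_add, ← mul_assoc, hI2, neg_one_mul, mul_zero] at h2
      have h3 : I * G (1, 0) - G (0, 1) = 0 := by
        rw [← h2]; ring_nf; abel
      have := sub_eq_zero.1 h3
      exact this.symm
    let L : ℂ →L[ℂ] ℍ[ℝ] :=
      { toFun := ⇑D
        map_add' := D.map_add
        map_smul' := fun z w => by
          show D (z * w) = φ z * D w; exact liftAux_mul_D I hI2 D hDi z w
        cont := D.cont }
    have hL : HasFDerivAt (fun w : ℂ => F n (em w)) L z := by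
      rw [hasFDerivAt_iff_isLittleO_nhds_zero] at hcomp ⊢
      exact hcomp
    exact hL.differentiableAt.differentiableWithinAt
  -- locally uniform convergence on V
  have hlocal : TendstoLocallyUniformlyOn (fun n z => F n (em z)) (fun z => f (em z)) atTop V := by
    rw [tendstoLocallyUniformlyOn_iff_forall_isCompact hVopen]
    intro K hKV hK
    have h1 := hconv (em '' K) (by rintro q ⟨w, hwK, rfl⟩; exact hKV hwK) (hK.image hemcont)
    exact (h1.comp em).mono (Set.subset_preimage_image em K)
  have hdf : DifferentiableOn ℂ (fun z => f (em z)) V :=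
    hlocal.differentiableOn (Eventually.of_forall hdiff) hVopen
  -- conclude at the given point
  set c' : ℝ × ℝ →L[ℝ] ℂ := Complex.equivRealProdCLM.symm.toContinuousLinearMap with hc'
  have hc'apply : ∀ q : ℝ × ℝ, c' q = (q.1 : ℂ) + q.2 * Complex.I := fun q =>
    Complex.equivRealProdCLM_symm_apply q
  set z0 : ℂ := c' p with hz0
  have hz0re : z0.re = p.1 := by rw [hz0, hc'apply]; simp
  have hz0im : z0.im = p.2 := by rw [hz0, hc'apply]; simp
  have hz0V : z0 ∈ V := by
    show em z0 ∈ U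
    rw [hem]; simp only [hz0re, hz0im]; exact hp
  have hC : DifferentiableAt ℂ (fun z => f (em z)) z0 :=
    (hdf z0 hz0V).differentiableAt (hVopen.mem_nhds hz0V)
  set L0 := fderiv ℂ (fun z => f (em z)) z0 with hL0
  have hh : HasFDerivAt (fun z => f (em z)) L0 z0 := hC.hasFDerivAt
  have hhR : HasFDerivAt (fun z => f (em z)) (L0.restrictScalars ℝ) z0 := hh.restrictScalars ℝ
  have hcc : HasFDerivAt (⇑c') c' p := c'.hasFDerivAt
  have hcomp : HasFDerivAt (sliceFun f I) ((L0.restrictScalars ℝ).comp c') p := by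
    have h0 := hhR.comp p hcc
    have hfe : (fun z => f (em z)) ∘ (⇑c') = sliceFun f I := by
      funext q
      simp only [Function.comp, em, sliceFun, hc'apply]
      norm_num
    rwa [hfe] at h0
  refine ⟨hcomp.differentiableAt, ?_⟩
  rw [hcomp.fderiv]
  have hc10 : c' (1, 0) = 1 := by rw [hc'apply]; simp
  have hc01 : c' (0, 1) = Complex.I := by rw [hc'apply]; simp
  simp only [ContinuousLinearMap.comp_apply, ContinuousLinearMap.coe_restrictScalars', hc10, hc01]
  have hLi : L0 Complex.I = I * L0 1 := by
    have := map_smul L0 Complex.I 1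
    rw [smul_eq_mul, mul_one] at this
    rw [this, hsmul, hφ, Complex.liftAux_apply_I]
  rw [hLi, ← mul_assoc, hI2, neg_one_mul, add_neg_cancel]
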